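/- (Add Lemma) Consider ℓ functions f_i: [0,1] → ℝ, 1 ≤ i ≤ ℓ, where each f_i is realized by a ReLU network in N(N_i, L_i). Then the sum f = Σ_{i=1}^ℓ f_i is realized by a ReLU network in N(Σ_{i=1}^ℓ (N_i + 2L_i − 2) − ℓ + 1, Σ_{i=1}^ℓ L_i − ℓ + 1). -/

import Mathlib

open MeasureTheory Set ENNReal

noncomputable section

/-- Coordinatewise ReLU activation. -/
def relu {m : ℕ} (x : Fin m → ℝ) : Fin m → ℝ := fun i => max 0 (x i)

/-- `M` is an affine map `ℝ^m → ℝ^k`. -/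
def IsAffineMap {m k : ℕ} (M : (Fin m → ℝ) → (Fin k → ℝ)) : Prop :=
  ∃ (A : Matrix (Fin k) (Fin m) ℝ) (b : Fin k → ℝ), ∀ x, M x = A.mulVec x + b

/-- `RealizedBy L m0 mL φ N` : the map `φ : ℝ^{m0} → ℝ^{mL}` is a fully connected feedforward
ReLU network of depth `L` and size `N`, i.e. `φ = M_L ∘ ReLU ∘ M_{L-1} ∘ ⋯ ∘ ReLU ∘ M_1` for
affine maps `M_i : ℝ^{m_{i-1}} → ℝ^{m_i}` with `m_1, …, m_{L-1} > 0` and `N = m_1 + ⋯ + m_L`. -/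
def RealizedBy : (L : ℕ) → (m0 mL : ℕ) → ((Fin m0 → ℝ) → (Fin mL → ℝ)) → ℕ → Prop
  | 0, _, _, _, _ => False
  | 1, _, mL, φ, N => IsAffineMap φ ∧ N = mL
  | (L + 2), m0, mL, φ, N =>
      ∃ (m1 : ℕ) (M1 : (Fin m0 → ℝ) → (Fin m1 → ℝ))
        (ψ : (Fin m1 → ℝ) → (Fin mL → ℝ)) (N' : ℕ),
        0 < m1 ∧ IsAffineMap M1 ∧ RealizedBy (L + 1) m1 mL ψ N' ∧
        N = m1 + N' ∧ ∀ x, φ x = ψ (relu (M1 x))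

/-- `f : [0,1] → ℝ` is realized (on `[0,1]`) by a ReLU network in `N(N, L)`. -/
def RealizesOn (f : ℝ → ℝ) (N L : ℕ) : Prop :=
  ∃ φ : (Fin 1 → ℝ) → (Fin 1 → ℝ), RealizedBy L 1 1 φ N ∧
    ∀ x ∈ Set.Icc (0 : ℝ) 1, φ (fun _ => x) 0 = f x

namespace AddAux

def leftF {a b : ℕ} (x : Fin (a + b) → ℝ) : Fin a → ℝ := fun i => x (Fin.castAdd b i)
def rightF {a b : ℕ} (x : Fin (a + b) → ℝ) : Fin b → ℝ := fun i => x (Fin.natAdd a i)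

lemma leftF_append {a b : ℕ} (u : Fin a → ℝ) (v : Fin b → ℝ) : leftF (Fin.append u v) = u := by
  funext i; simp [leftF]

lemma rightF_append {a b : ℕ} (u : Fin a → ℝ) (v : Fin b → ℝ) : rightF (Fin.append u v) = v := by
  funext i; simp [rightF]

lemma relu_append {a b : ℕ} (u : Fin a → ℝ) (v : Fin b → ℝ) :
    relu (Fin.append u v) = Fin.append (relu u) (relu v) := by
  funext i
  refine Fin.addCases (fun i => ?_) (fun i => ?_) i <;> simp [relu]

lemma isAffineMap_iff {m k : ℕ} (M : (Fin m → ℝ) → (Fin k → ℝ)) :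
    IsAffineMap M ↔ ∀ i, ∃ (w : Fin m → ℝ) (c : ℝ), ∀ x, M x i = (∑ j, w j * x j) + c := by
  constructor
  · rintro ⟨A, b, h⟩ i
    exact ⟨A i, b i, fun x => by simp [h, Matrix.mulVec, dotProduct]⟩
  · intro h
    refine ⟨fun i => (h i).choose, fun i => (h i).choose_spec.choose, fun x => ?_⟩
    funext i
    simpa [Matrix.mulVec, dotProduct] using (h i).choose_spec.choose_spec x

lemma isAffineMap_comp {a b c : ℕ} {M : (Fin a → ℝ) → (Fin b → ℝ)} {M' : (Fin b → ℝ) → (Fin c → ℝ)}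
    (h' : IsAffineMap M') (h : IsAffineMap M) : IsAffineMap (fun x => M' (M x)) := by
  obtain ⟨A, u, hA⟩ := h
  obtain ⟨A', u', hA'⟩ := h'
  refine ⟨A' * A, A'.mulVec u + u', fun x => ?_⟩
  simp [hA, hA', Matrix.mulVec_add, Matrix.mulVec_mulVec, add_assoc]

lemma isAffineMap_id {a : ℕ} : IsAffineMap (fun x : Fin a → ℝ => x) :=
  ⟨1, 0, fun x => by simp⟩

lemma isAffineMap_append {m k k' : ℕ} {M : (Fin m → ℝ) → (Fin k → ℝ)}
    {M' : (Fin m → ℝ) → (Fin k' → ℝ)} (h : IsAffineMap M) (h' : IsAffineMap M') :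
    IsAffineMap (fun x => Fin.append (M x) (M' x)) := by
  rw [isAffineMap_iff] at h h' ⊢
  intro i
  refine Fin.addCases (fun i => ?_) (fun i => ?_) i
  · obtain ⟨w, c, hw⟩ := h i
    exact ⟨w, c, fun x => by simpa using hw x⟩
  · obtain ⟨w, c, hw⟩ := h' i
    exact ⟨w, c, fun x => by simpa using hw x⟩

lemma isAffineMap_leftF {a b : ℕ} : IsAffineMap (fun x : Fin (a + b) → ℝ => leftF x) := by
  rw [isAffineMap_iff]
  intro i
  refine ⟨fun j => if j = Fin.castAdd b i then 1 else 0, 0, fun x => ?_⟩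
  simp [leftF, ite_mul, Finset.sum_ite_eq']

lemma isAffineMap_rightF {a b : ℕ} : IsAffineMap (fun x : Fin (a + b) → ℝ => rightF x) := by
  rw [isAffineMap_iff]
  intro i
  refine ⟨fun j => if j = Fin.natAdd a i then 1 else 0, 0, fun x => ?_⟩
  simp [rightF, ite_mul, Finset.sum_ite_eq']



lemma realizedBy_le : ∀ (L : ℕ) {a b : ℕ} {φ : (Fin a → ℝ) → (Fin b → ℝ)} {N : ℕ},
    RealizedBy L a b φ N → b ≤ N
  | 0, _, _, _, _, h => h.elim
  | 1, _, _, _, _, h => h.2.ge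
  | (L + 2), a, b, φ, N, h => by
      obtain ⟨m1, M1, ψ, N', hm, hA, hR, hN, hφ⟩ := h
      have := realizedBy_le (L + 1) hR
      omega

lemma realizedBy_congr {L a b N} {φ φ' : (Fin a → ℝ) → (Fin b → ℝ)}
    (h : RealizedBy L a b φ N) (he : ∀ x, φ' x = φ x) : RealizedBy L a b φ' N := by
  have : φ' = φ := funext he
  rwa [this]

lemma realizedBy_precomp : ∀ (L : ℕ) {a b c : ℕ} {ψ : (Fin b → ℝ) → (Fin c → ℝ)} {N : ℕ}
    (M : (Fin a → ℝ) → (Fin b → ℝ)),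
    RealizedBy L b c ψ N → IsAffineMap M → RealizedBy L a c (fun x => ψ (M x)) N
  | 0, _, _, _, _, _, _, h, _ => h.elim
  | 1, _, _, _, _, _, M, h, hM => ⟨by
      obtain ⟨A, u, hA⟩ := h.1
      obtain ⟨A', u', hA'⟩ := hM
      exact ⟨A * A', A.mulVec u' + u, fun x => by
        simp [hA, hA', Matrix.mulVec_add, Matrix.mulVec_mulVec, add_assoc]⟩, h.2⟩
  | (L + 2), a, b, c, ψ, N, M, h, hM => by
      obtain ⟨m1, M1, χ, N', hm, hA, hR, hN, hφ⟩ := h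
      refine ⟨m1, fun x => M1 (M x), χ, N', hm, ?_, hR, hN, fun x => hφ (M x)⟩
      obtain ⟨A, u, hA'⟩ := hA
      obtain ⟨A', u', hA''⟩ := hM
      exact ⟨A * A', A.mulVec u' + u, fun x => by
        simp [hA', hA'', Matrix.mulVec_add, Matrix.mulVec_mulVec, add_assoc]⟩

lemma realizedBy_comp : ∀ (L1 : ℕ) {L2 a b c : ℕ}
    {φ : (Fin a → ℝ) → (Fin b → ℝ)} {ψ : (Fin b → ℝ) → (Fin c → ℝ)} {N1 N2 : ℕ},
    RealizedBy (L1 + 1) a b φ N1 → RealizedBy (L2 + 1) b c ψ N2 →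
    RealizedBy (L1 + L2 + 1) a c (fun x => ψ (φ x)) (N1 - b + N2)
  | 0, L2, a, b, c, φ, ψ, N1, N2, h1, h2 => by
      have hb : N1 = b := h1.2
      have : N1 - b + N2 = N2 := by omega
      rw [this, Nat.zero_add]
      exact realizedBy_precomp _ φ h2 h1.1
  | (L1 + 1), L2, a, b, c, φ, ψ, N1, N2, h1, h2 => by
      obtain ⟨m1, M1, χ, N', hm, hA, hR, hN, hφ⟩ := h1
      have hb : b ≤ N' := realizedBy_le _ hR
      have ih := realizedBy_comp L1 hR h2
      have hd : L1 + 1 + L2 + 1 = (L1 + L2) + 2 := by omega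
      rw [hd]
      refine ⟨m1, M1, fun y => ψ (χ y), N' - b + N2, hm, hA, ih, by omega, fun x => by
        simp only [hφ x]⟩


lemma realizedBy_par : ∀ (L : ℕ) {a b a' b' : ℕ}
    {φ : (Fin a → ℝ) → (Fin b → ℝ)} {φ' : (Fin a' → ℝ) → (Fin b' → ℝ)} {N N' : ℕ},
    RealizedBy L a b φ N → RealizedBy L a' b' φ' N' →
    RealizedBy L (a + a') (b + b')
      (fun x => Fin.append (φ (leftF x)) (φ' (rightF x))) (N + N')
  | 0, _, _, _, _, _, _, _, _, h, _ => h.elim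
  | 1, a, b, a', b', φ, φ', N, N', h, h' => by
      refine ⟨?_, by rw [h.2, h'.2]⟩
      exact isAffineMap_append (isAffineMap_comp h.1 isAffineMap_leftF)
        (isAffineMap_comp h'.1 isAffineMap_rightF)
  | (L + 2), a, b, a', b', φ, φ', N, N', h, h' => by
      obtain ⟨m1, M1, ψ, K, hm, hA, hR, hN, hφ⟩ := h
      obtain ⟨m1', M1', ψ', K', hm', hA', hR', hN', hφ'⟩ := h'
      have ih := realizedBy_par (L + 1) hR hR'
      refine ⟨m1 + m1', fun x => Fin.append (M1 (leftF x)) (M1' (rightF x)),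
        fun y => Fin.append (ψ (leftF y)) (ψ' (rightF y)), K + K', by omega,
        isAffineMap_append (isAffineMap_comp hA isAffineMap_leftF)
          (isAffineMap_comp hA' isAffineMap_rightF), ih, by omega, fun x => ?_⟩
      simp only [relu_append, leftF_append, rightF_append, hφ (leftF x), hφ' (rightF x)]

/-- A width-1 "carry" network of arbitrary depth: computes the identity on
nonnegative inputs. -/
lemma carry_net : ∀ (K : ℕ), ∃ φ : (Fin 1 → ℝ) → (Fin 1 → ℝ),
    RealizedBy (K + 1) 1 1 φ (K + 1) ∧ ∀ x : Fin 1 → ℝ, 0 ≤ x 0 → φ x = x := by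
  intro K
  induction K with
  | zero => exact ⟨fun x => x, ⟨isAffineMap_id, rfl⟩, fun x _ => rfl⟩
  | succ K ih =>
      obtain ⟨φ, hφ, hid⟩ := ih
      refine ⟨fun x => φ (relu x), ⟨1, fun x => x, φ, K + 1, one_pos, isAffineMap_id,
        hφ, by omega, fun x => rfl⟩, fun x hx => ?_⟩
      have h0 : (0 : ℝ) ≤ relu x 0 := le_max_left _ _
      show φ (relu x) = x
      rw [hid (relu x) h0]
      funext i
      have : i = 0 := Subsingleton.elim i 0
      subst this
      simp [relu, hx]

lemma isAffineMap_continuous {a b : ℕ} {M : (Fin a → ℝ) → (Fin b → ℝ)}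
    (h : IsAffineMap M) : Continuous M := by
  obtain ⟨A, u, hA⟩ := h
  have h1 : Continuous fun x : Fin a → ℝ => A.mulVec x := by
    refine continuous_pi fun i => ?_
    have : Continuous fun x : Fin a → ℝ => ∑ j, A i j * x j :=
      continuous_finset_sum _ fun j _ => (continuous_const.mul (continuous_apply j))
    simpa [Matrix.mulVec, dotProduct] using this
  have : M = fun x => A.mulVec x + u := funext hA
  rw [this]
  exact h1.add continuous_const

lemma realizedBy_continuous : ∀ (L : ℕ) {a b : ℕ} {φ : (Fin a → ℝ) → (Fin b → ℝ)} {N : ℕ},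
    RealizedBy L a b φ N → Continuous φ
  | 0, _, _, _, _, h => h.elim
  | 1, a, b, φ, N, h => isAffineMap_continuous h.1
  | (L + 2), a, b, φ, N, h => by
      obtain ⟨m1, M1, ψ, K, hm, hA, hR, hN, hφ⟩ := h
      have hM1 : Continuous M1 := isAffineMap_continuous hA
      have hrelu : Continuous (relu (m := m1)) :=
        continuous_pi fun i => continuous_const.max (continuous_apply i)
      have hψ := realizedBy_continuous (L + 1) hR
      have : Continuous fun x => ψ (relu (M1 x)) := hψ.comp (hrelu.comp hM1)
      exact this.congr fun x => (hφ x).symm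

lemma realizedBy_posL {L a b : ℕ} {φ : (Fin a → ℝ) → (Fin b → ℝ)} {N : ℕ}
    (h : RealizedBy L a b φ N) : 1 ≤ L := by
  cases L with
  | zero => exact h.elim
  | succ L => omega

def pick (x s : ℝ) : Fin (1 + 1) → ℝ := Fin.append (fun _ => x) (fun _ => s)

lemma pick_zero (x s : ℝ) : pick x s 0 = x := rfl
lemma pick_one (x s : ℝ) : pick x s 1 = s := rfl

/-- Auxiliary predicate: `g` together with a running partial sum `s` (bounded below by an
arbitrary prescribed constant) can be computed by a network of size `N` and depth `L`. -/
def Chain (g : ℝ → ℝ) (N L : ℕ) : Prop :=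
  (∃ B : ℝ, ∀ x ∈ Set.Icc (0 : ℝ) 1, B ≤ g x) ∧
  ∀ c : ℝ, ∃ φ : (Fin 2 → ℝ) → (Fin 1 → ℝ), RealizedBy L 2 1 φ N ∧
    ∀ x ∈ Set.Icc (0 : ℝ) 1, ∀ s : ℝ, c ≤ s → φ (pick x s) 0 = g x + s

lemma chain_zero : Chain (fun _ => 0) 1 1 := by
  refine ⟨⟨0, fun x _ => le_refl 0⟩, fun c => ⟨fun y _ => y 1, ⟨?_, rfl⟩, fun x hx s hs => by
    simp [pick_one]⟩⟩
  rw [isAffineMap_iff]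
  intro i
  refine ⟨fun j => if j = 1 then 1 else 0, 0, fun y => ?_⟩
  simp [ite_mul, Finset.sum_ite_eq']

lemma chain_final {g : ℝ → ℝ} {N L : ℕ} (h : Chain g N L) : RealizesOn g N L := by
  obtain ⟨φ, hφ, he⟩ := h.2 0
  have hP : IsAffineMap (fun y : Fin 1 → ℝ => pick (y 0) 0) := by
    refine isAffineMap_append ?_ ?_
    · rw [isAffineMap_iff]
      exact fun i => ⟨fun _ => 1, 0, fun y => by simp⟩
    · rw [isAffineMap_iff]
      exact fun i => ⟨0, 0, fun y => by simp⟩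
  refine ⟨fun y => φ (pick (y 0) 0), realizedBy_precomp L _ hφ hP, fun x hx => ?_⟩
  show φ (pick ((fun _ : Fin 1 => x) 0) 0) 0 = g x
  rw [he x hx 0 le_rfl, add_zero]

lemma chain_step {f g : ℝ → ℝ} {Nf Ng lf lg : ℕ}
    (hf : RealizesOn f Nf (lf + 1)) (hg : Chain g Ng (lg + 1)) :
    Chain (fun x => f x + g x) (Nf + 2 * lf + Ng - 1) (lf + lg + 1) := by
  obtain ⟨φf, hφf, hfe⟩ := hf
  obtain ⟨⟨Bg, hBg⟩, hgc⟩ := hg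
  have hNf : 1 ≤ Nf := realizedBy_le _ hφf
  have hcont : Continuous fun t : ℝ => φf (fun _ => t) 0 := by
    have h1 := realizedBy_continuous _ hφf
    have h2 : Continuous fun t : ℝ => (fun _ : Fin 1 => t) := continuous_pi fun _ => continuous_id
    exact (continuous_apply 0).comp (h1.comp h2)
  obtain ⟨x0, hx00, hmin⟩ := isCompact_Icc.exists_isMinOn
    (⟨0, by norm_num⟩ : (Set.Icc (0:ℝ) 1).Nonempty) hcont.continuousOn
  set bf := φf (fun _ => x0) 0 with hbf
  have hflb : ∀ x ∈ Set.Icc (0:ℝ) 1, bf ≤ f x := fun x hx => by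
    rw [← hfe x hx]; exact hmin hx
  constructor
  · exact ⟨bf + Bg, fun x hx => add_le_add (hflb x hx) (hBg x hx)⟩
  intro c
  obtain ⟨φg, hφg, hge⟩ := hgc (c + bf)
  obtain ⟨cr, hcr, hcid⟩ := carry_net lf
  set P : (Fin 2 → ℝ) → (Fin (1 + (1 + 1)) → ℝ) :=
    fun y => Fin.append (fun _ => y 0) (Fin.append (fun _ => y 0) (fun _ => y 1 - c)) with hPdef
  have hP : IsAffineMap P := by
    refine isAffineMap_append ?_ (isAffineMap_append ?_ ?_) <;> rw [isAffineMap_iff]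
    · exact fun i => ⟨fun j => if j = 0 then 1 else 0, 0, fun y => by
        simp [ite_mul, Finset.sum_ite_eq']⟩
    · exact fun i => ⟨fun j => if j = 0 then 1 else 0, 0, fun y => by
        simp [ite_mul, Finset.sum_ite_eq']⟩
    · exact fun i => ⟨fun j => if j = 1 then 1 else 0, -c, fun y => by
        simp [ite_mul, Finset.sum_ite_eq', sub_eq_add_neg]⟩
  set i0 : Fin (1 + (1 + 1)) := Fin.castAdd (1 + 1) 0 with hi0
  set i1 : Fin (1 + (1 + 1)) := Fin.natAdd 1 (Fin.castAdd 1 0) with hi1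
  set i2 : Fin (1 + (1 + 1)) := Fin.natAdd 1 (Fin.natAdd 1 0) with hi2
  set Q : (Fin (1 + (1 + 1)) → ℝ) → (Fin 2 → ℝ) :=
    fun y => Fin.append (fun _ : Fin 1 => y i0) (fun _ : Fin 1 => y i1 + y i2 + c) with hQdef
  have hQ : IsAffineMap Q := by
    refine isAffineMap_append ?_ ?_ <;> rw [isAffineMap_iff]
    · exact fun i => ⟨fun j => if j = i0 then 1 else 0, 0, fun y => by
        simp [ite_mul, Finset.sum_ite_eq']⟩
    · exact fun i => ⟨fun j => (if j = i1 then 1 else 0) + (if j = i2 then 1 else 0), c,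
        fun y => by simp [add_mul, ite_mul, Finset.sum_add_distrib, Finset.sum_ite_eq']⟩
  have par3 := realizedBy_par (lf + 1) hcr (realizedBy_par (lf + 1) hφf hcr)
  have pre := realizedBy_precomp (lf + 1) P par3 hP
  have hQr : RealizedBy 1 (1 + (1 + 1)) 2 Q 2 := ⟨hQ, rfl⟩
  have stage := realizedBy_comp lf (L2 := 0) pre hQr
  have total := realizedBy_comp lf (L2 := lg) stage hφg
  have hsz : (lf + 1 + (Nf + (lf + 1)) - (1 + (1 + 1)) + 2) - 2 + Ng
      = Nf + 2 * lf + Ng - 1 := by omega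
  rw [hsz] at total
  refine ⟨_, total, fun x hx s hs => ?_⟩
  have hx0 : (0:ℝ) ≤ (fun _ : Fin 1 => x) 0 := hx.1
  have hsc0 : (0:ℝ) ≤ (fun _ : Fin 1 => s - c) 0 := by simp [hs]
  have e1 : P (pick x s) = Fin.append (fun _ : Fin 1 => x)
      (Fin.append (fun _ : Fin 1 => x) (fun _ : Fin 1 => s - c)) := rfl
  show φg (Q (Fin.append (cr (leftF (P (pick x s))))
      (Fin.append (φf (leftF (rightF (P (pick x s)))))
        (cr (rightF (rightF (P (pick x s)))))))) 0 = f x + g x + s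
  rw [e1, leftF_append, rightF_append, leftF_append, rightF_append]
  rw [hcid _ hx0, hcid _ hsc0]
  have eφf : φf (fun _ : Fin 1 => x) = (fun _ : Fin 1 => f x) := by
    funext i
    have hi : i = 0 := Subsingleton.elim i 0
    rw [hi]; exact hfe x hx
  rw [eφf]
  have eQ : Q (Fin.append (fun _ : Fin 1 => x)
      (Fin.append (fun _ : Fin 1 => f x) (fun _ : Fin 1 => s - c))) = pick x (f x + s) := by
    funext i
    have key : ∀ j : Fin (1 + 1), Q (Fin.append (fun _ : Fin 1 => x)
        (Fin.append (fun _ : Fin 1 => f x) (fun _ : Fin 1 => s - c))) j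
        = pick x (f x + s) j := by
      refine Fin.addCases (fun i => ?_) (fun i => ?_)
      · simp [hQdef, hi0, pick, Fin.append_left]
        rfl
      · simp only [hQdef, hi1, hi2, pick, Fin.append_right, Fin.append_left]
        ring
    exact key i
  rw [eQ, hge x hx (f x + s) (by have := hflb x hx; linarith)]
  ring

lemma chain_sum : ∀ (ℓ : ℕ) (f : Fin ℓ → ℝ → ℝ) (N L : Fin ℓ → ℕ),
    (∀ i, RealizesOn (f i) (N i) (L i)) →
    Chain (fun x => ∑ i, f i x) ((∑ i, (N i + 2 * L i - 3)) + 1) ((∑ i, (L i - 1)) + 1) := by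
  intro ℓ
  induction ℓ with
  | zero =>
      intro f N L h
      have hfun : (fun x : ℝ => ∑ i : Fin 0, f i x) = fun _ => 0 := by funext x; simp
      rw [hfun]
      simpa using chain_zero
  | succ ℓ ih =>
      intro f N L h
      obtain ⟨φ0, hφ0, _⟩ := h 0
      have hL0 : 1 ≤ L 0 := realizedBy_posL hφ0
      have hN0 : 1 ≤ N 0 := realizedBy_le _ hφ0
      obtain ⟨lf, hlf⟩ : ∃ lf, L 0 = lf + 1 := ⟨L 0 - 1, by omega⟩
      have hf0 : RealizesOn (f 0) (N 0) (lf + 1) := by rw [← hlf]; exact h 0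
      have htail := ih (fun i => f i.succ) (fun i => N i.succ) (fun i => L i.succ)
        (fun i => h i.succ)
      have hstep := chain_step hf0 htail
      have hfun : (fun x : ℝ => ∑ i : Fin (ℓ + 1), f i x)
          = fun x => f 0 x + ∑ i : Fin ℓ, f i.succ x := by
        funext x; rw [Fin.sum_univ_succ]
      rw [hfun]
      have e1 : (∑ i : Fin (ℓ + 1), (N i + 2 * L i - 3)) + 1
          = N 0 + 2 * lf + ((∑ i : Fin ℓ, (N i.succ + 2 * L i.succ - 3)) + 1) - 1 := by
        rw [Fin.sum_univ_succ]
        omega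
      have e2 : (∑ i : Fin (ℓ + 1), (L i - 1)) + 1
          = lf + (∑ i : Fin ℓ, (L i.succ - 1)) + 1 := by
        rw [Fin.sum_univ_succ]
        omega
      rw [e1, e2]
      exact hstep

end AddAux

open AddAux in
theorem add_lemma (ℓ : ℕ) (f : Fin ℓ → ℝ → ℝ) (N L : Fin ℓ → ℕ)
    (h : ∀ i, RealizesOn (f i) (N i) (L i)) :
    RealizesOn (fun x => ∑ i, f i x)
      (∑ i, (N i + 2 * L i - 2) - ℓ + 1) (∑ i, L i - ℓ + 1) := by
  have key := chain_final (chain_sum ℓ f N L h)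
  have hb : ∀ i, 1 ≤ N i ∧ 1 ≤ L i := fun i => by
    obtain ⟨φ, hφ, _⟩ := h i
    exact ⟨realizedBy_le _ hφ, realizedBy_posL hφ⟩
  have e1 : ∑ i, (N i + 2 * L i - 2) - ℓ + 1 = (∑ i, (N i + 2 * L i - 3)) + 1 := by
    have h2 : ∑ i, (N i + 2 * L i - 2) = (∑ i, (N i + 2 * L i - 3)) + ℓ := by
      have hc : ∀ i ∈ Finset.univ, N i + 2 * L i - 2 = (N i + 2 * L i - 3) + 1 := fun i _ => by
        have := hb i; omega
      rw [Finset.sum_congr rfl hc, Finset.sum_add_distrib]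
      simp
    omega
  have e2 : ∑ i, L i - ℓ + 1 = (∑ i, (L i - 1)) + 1 := by
    have h2 : ∑ i, L i = (∑ i, (L i - 1)) + ℓ := by
      have hc : ∀ i ∈ Finset.univ, L i = (L i - 1) + 1 := fun i _ => by
        have := hb i; omega
      rw [Finset.sum_congr rfl hc, Finset.sum_add_distrib]
      simp
    omega
  rw [e1, e2]
  exact key
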